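/- Let ε > 0, let a₂₂, a₂₃ ∈ ℂ, let B = (b_{ij}) be a 2×2 complex matrix, and set A_l = [[1, 0],[0, a₂₂]] and A_r = [[0, 0],[a₂₃, 1]] (the Schubert cell 𝒞_{1,4} form). Then the constraint equations (E1) and (E2) both hold if and only if a₂₃ = 0, Im(a₂₂) = 0, b₁₂ = 0, and Re(b₂₂) = 0. (This is the classification of class 𝔄_{1,4} self-adjoint boundary conditions.) -/

import Mathlib

open Matrix

/-- Classification of class `𝔄_{1,4}` self-adjoint boundary conditions. -/
theorem stmt7 (ε : ℝ) (hε : 0 < ε) (a₂₂ a₂₃ : ℂ)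
    (B : Matrix (Fin 2) (Fin 2) ℂ)
    (Ω₁ Ω₂ : Matrix (Fin 2) (Fin 2) ℂ)
    (hΩ₁ : Ω₁ = !![(ε : ℂ), 0; 0, -(ε : ℂ)]) (hΩ₂ : Ω₂ = !![0, -1; 1, 0])
    (Al Ar : Matrix (Fin 2) (Fin 2) ℂ)
    (hAl : Al = !![1, 0; 0, a₂₂]) (hAr : Ar = !![0, 0; a₂₃, 1]) :
    (-(Al * Ω₁ * Arᴴ) + Ar * Ω₁ * Alᴴ + Ar * Ω₂ * Arᴴ = 0 ∧
      B * Ω₁ * Arᴴ + Ar * Ω₁ * Bᴴ = 0) ↔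
    (a₂₃ = 0 ∧ a₂₂.im = 0 ∧ B 0 1 = 0 ∧ (B 1 1).re = 0) := by
  have hε0 : ε ≠ 0 := hε.ne'
  subst hΩ₁ hΩ₂ hAl hAr
  simp only [← Matrix.ext_iff, Fin.forall_fin_two]
  simp [Matrix.mul_apply, Matrix.vecMul, dotProduct, Fin.sum_univ_two,
    conjTranspose_apply]
  constructor
  · rintro ⟨⟨h1, h2, h3⟩, h4, h5, h6⟩
    have ha : a₂₃ = 0 := h1.resolve_left (by exact_mod_cast hε0)
    subst ha
    simp [Complex.ext_iff, hε0] at h3 h4 h6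
    refine ⟨rfl, ?_, ?_, ?_⟩
    · have := h3.2
      nlinarith
    · have := h4
      simp [Complex.ext_iff] at this ⊢
      constructor <;> nlinarith
    · have := h6.1
      nlinarith
  · rintro ⟨rfl, him, hb, hbre⟩
    simp [hb, Complex.ext_iff, him, hbre]
    constructor <;> ring
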